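/- For every 2×2 complex matrix A and every q, the identity Per_q(A) = ((1+q)/2)·per(q^M ∘ A) + ((1−q)/2)·det((−q)^M ∘ A) holds with M = [[0,1],[−1,0]], where q^M (resp. (−q)^M) is the entrywise power matrix and ∘ the Hadamard product. -/
import Mathlib


/-- The inversion number of a permutation of `Fin n`. -/
def inversions {n : ℕ} (σ : Equiv.Perm (Fin n)) : ℕ :=
  (Finset.univ.filter (fun p : Fin n × Fin n => p.1 < p.2 ∧ σ p.2 < σ p.1)).card

/-- The q-permanent of a complex matrix. -/
noncomputable def qperm {n : ℕ} (q : ℂ) (A : Matrix (Fin n) (Fin n) ℂ) : ℂ :=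
  ∑ σ : Equiv.Perm (Fin n), q ^ inversions σ * ∏ i, A i (σ i)

/-- The permanent of a complex matrix. -/
noncomputable def perman {n : ℕ} (A : Matrix (Fin n) (Fin n) ℂ) : ℂ :=
  ∑ σ : Equiv.Perm (Fin n), ∏ i, A i (σ i)

lemma univ_perm_two : (Finset.univ : Finset (Equiv.Perm (Fin 2))) = {1, Equiv.swap 0 1} := by
  decide

lemma inversions_one : inversions (1 : Equiv.Perm (Fin 2)) = 0 := by decide
lemma inversions_swap : inversions (Equiv.swap (0:Fin 2) 1) = 1 := by decide

lemma sum_perm_two (f : Equiv.Perm (Fin 2) → ℂ) :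
    ∑ σ : Equiv.Perm (Fin 2), f σ = f 1 + f (Equiv.swap 0 1) := by
  rw [univ_perm_two, Finset.sum_pair (by decide)]

theorem mixed_polya_two {q : ℂ} (hq : q ≠ 0) (A : Matrix (Fin 2) (Fin 2) ℂ) :
    qperm q A =
      (1 + q) / 2 * perman (Matrix.of fun i j => q ^ (!![(0 : ℤ), 1; -1, 0] i j) * A i j) +
      (1 - q) / 2 *
        Matrix.det (Matrix.of fun i j => (-q) ^ (!![(0 : ℤ), 1; -1, 0] i j) * A i j) := by
  have hq' : (-q) ≠ 0 := neg_ne_zero.mpr hq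
  rw [qperm, perman, Matrix.det_fin_two, sum_perm_two, sum_perm_two]
  simp only [inversions_one, inversions_swap, Fin.prod_univ_two, Matrix.of_apply,
    Equiv.Perm.one_apply, Equiv.swap_apply_left, Equiv.swap_apply_right,
    Matrix.cons_val', Matrix.cons_val_zero, Matrix.cons_val_one, Matrix.head_cons,
    Matrix.head_fin_const, Matrix.empty_val', Matrix.cons_val_fin_one,
    zpow_zero, zpow_one, zpow_neg, pow_zero, pow_one, one_mul]
  field_simp
  ring
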